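/- Let $F$ be a number field, $q(x,y,z)$ a non-degenerate ternary quadratic form over $F$, and $p(t) = c \cdot p_1(t)^{e_1} \cdots p_s(t)^{e_s}$ with $c \in F^\times$ and $p_i$ distinct monic irreducible polynomials. If at least one exponent $e_i$ is odd, then there exist infinitely many finite places $w$ of $F$ for which there exists $t_w \in \mathfrak{o}_w$ such that $w(p(t_w))$ is odd and $-p(t_w)\cdot\det(q) \notin F_w^{\times 2}$. -/

import Mathlib

open IsDedekindDomain Multiplicative

set_option linter.unusedSectionVars false
set_option maxHeartbeats 1000000

open Polynomial NumberField IsDedekindDomain.HeightOneSpectrum Function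

section Aux

variable {F : Type*} [Field F] [NumberField F]

lemma stmt5_aux_exists_prime {u : 𝓞 F} (h0 : u ≠ 0) (hu : ¬ IsUnit u) :
    ∃ w : HeightOneSpectrum (𝓞 F), u ∈ w.asIdeal := by
  obtain ⟨J, hJmax, hJ⟩ := Ideal.exists_le_maximal (Ideal.span {u})
    (by rwa [Ne, Ideal.span_singleton_eq_top])
  have humem : u ∈ J := hJ (Ideal.mem_span_singleton_self u)
  have hbot : J ≠ ⊥ := by rintro rfl; exact h0 (by simpa using humem)
  exact ⟨⟨J, hJmax.isPrime, hbot⟩, humem⟩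

lemma stmt5_aux_infinite (f : (𝓞 F)[X]) (hdeg : 0 < f.natDegree) :
    {w : HeightOneSpectrum (𝓞 F) | ∃ t : 𝓞 F, f.eval t ∈ w.asIdeal}.Infinite := by
  classical
  by_contra hfin
  rw [Set.not_infinite] at hfin
  have hf0 : f ≠ 0 := fun h => by simp [h] at hdeg
  obtain ⟨x₀, hx₀⟩ : ∃ x₀ : 𝓞 F, f.eval x₀ ≠ 0 := by
    obtain ⟨x, hx⟩ := ((Set.infinite_univ (α := 𝓞 F)).diff
      (Polynomial.finite_setOf_isRoot hf0)).nonempty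
    exact ⟨x, fun h => hx.2 h⟩
  set g := f.comp (X + C x₀) with hg
  have hgdeg : g.natDegree = f.natDegree := by
    simp [hg, natDegree_comp]
  have hgeval : ∀ t, g.eval t = f.eval (t + x₀) := by
    intro t; simp [hg, eval_comp]
  set c₀ := g.eval 0 with hc₀
  have hc₀0 : c₀ ≠ 0 := by simpa [hc₀, hgeval] using hx₀
  have hfing : {w : HeightOneSpectrum (𝓞 F) | ∃ t, g.eval t ∈ w.asIdeal}.Finite :=
    hfin.subset (fun w ⟨t, ht⟩ => ⟨t + x₀, by rwa [← hgeval]⟩)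
  have hchoice : ∀ w : HeightOneSpectrum (𝓞 F), ∃ z : 𝓞 F, z ∈ w.asIdeal ∧ z ≠ 0 := fun w =>
    Submodule.exists_mem_ne_zero_of_ne_bot w.ne_bot
  choose z hz1 hz2 using hchoice
  set m₀ := ∏ w ∈ hfing.toFinset, z w with hm₀
  have hm₀0 : m₀ ≠ 0 := Finset.prod_ne_zero_iff.mpr fun w _ => hz2 w
  have hm₀mem : ∀ w : HeightOneSpectrum (𝓞 F),
      (∃ t, g.eval t ∈ w.asIdeal) → m₀ ∈ w.asIdeal := by
    intro w hw
    have hwin : w ∈ hfing.toFinset := hfing.mem_toFinset.mpr hw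
    obtain ⟨d, hd⟩ := Finset.dvd_prod_of_mem z hwin
    rw [hm₀, hd]
    exact Ideal.mul_mem_right _ _ (hz1 w)
  set m := c₀ * m₀ with hm
  have hm0 : m ≠ 0 := mul_ne_zero hc₀0 hm₀0
  -- Every value g(m·x) is c₀ times a unit (or zero)
  have key : ∀ x : 𝓞 F, ∃ u : 𝓞 F, g.eval (m * x) = c₀ * u ∧ (IsUnit u ∨ u = 0) := by
    intro x
    obtain ⟨y, hy⟩ : m * x ∣ g.eval (m * x) - c₀ := by
      simpa [hc₀] using Polynomial.sub_dvd_eval_sub (m * x) 0 g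
    refine ⟨1 + m₀ * x * y, by rw [hm] at hy ⊢; linear_combination hy, ?_⟩
    by_cases hu0 : (1 : 𝓞 F) + m₀ * x * y = 0
    · exact Or.inr hu0
    left
    by_contra hnu
    obtain ⟨w, hw⟩ := stmt5_aux_exists_prime hu0 hnu
    have hwS : ∃ t, g.eval t ∈ w.asIdeal := by
      refine ⟨m * x, ?_⟩
      have : g.eval (m * x) = c₀ * (1 + m₀ * x * y) := by rw [hm] at hy ⊢; linear_combination hy
      rw [this]
      exact Ideal.mul_mem_left _ _ hw
    have hm₀w : m₀ ∈ w.asIdeal := hm₀mem w hwS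
    have h1 : (1 : 𝓞 F) ∈ w.asIdeal := by
      have : (1 : 𝓞 F) = (1 + m₀ * x * y) - m₀ * (x * y) := by ring
      rw [this]
      exact Ideal.sub_mem _ hw (Ideal.mul_mem_right _ _ hm₀w)
    exact w.isPrime.ne_top ((Ideal.eq_top_iff_one _).mpr h1)
  -- build the norm polynomial over ℂ
  set h := g.comp (C m * X) with hh
  have hhdeg : 0 < h.natDegree := by
    rw [hh, natDegree_comp, natDegree_C_mul_X m hm0, mul_one, hgdeg]
    exact hdeg
  have hheval : ∀ x : 𝓞 F, h.eval x = g.eval (m * x) := by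
    intro x; simp [hh, eval_comp]
  set φ := algebraMap (𝓞 F) F with hφ
  have hφinj : Function.Injective φ := IsFractionRing.injective (𝓞 F) F
  set f' := h.map φ with hf'
  have hf'0 : f' ≠ 0 := by
    rw [hf', Ne, Polynomial.map_eq_zero_iff hφinj]
    intro hcon
    rw [hcon] at hhdeg; simp at hhdeg
  have hf'deg : f'.natDegree = h.natDegree := natDegree_map_eq_of_injective hφinj h
  set V := ∏ σ : F →ₐ[ℚ] ℂ, (f'.map (σ : F →+* ℂ)) with hV
  have hmapne : ∀ σ : F →ₐ[ℚ] ℂ, f'.map (σ : F →+* ℂ) ≠ 0 := fun σ =>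
    (Polynomial.map_ne_zero_iff (σ : F →+* ℂ).injective).mpr hf'0
  have hV0 : V ≠ 0 := Finset.prod_ne_zero_iff.mpr fun σ _ => hmapne σ
  have hVdeg : 0 < V.natDegree := by
    rw [hV, Polynomial.natDegree_prod _ _ fun σ _ => hmapne σ]
    have hcard : 0 < Fintype.card (F →ₐ[ℚ] ℂ) := by
      rw [AlgHom.card]
      exact Module.finrank_pos
    have : ∀ σ : F →ₐ[ℚ] ℂ, (f'.map (σ : F →+* ℂ)).natDegree = h.natDegree := fun σ => by
      rw [natDegree_map_eq_of_injective (σ : F →+* ℂ).injective, hf'deg]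
    rw [Finset.sum_congr rfl fun σ _ => this σ, Finset.sum_const, Finset.card_univ, smul_eq_mul]
    exact Nat.mul_pos hcard hhdeg
  have hVeval : ∀ n : ℤ, V.eval (n : ℂ) =
      algebraMap ℚ ℂ (Algebra.norm ℚ (φ (h.eval (n : 𝓞 F)))) := by
    intro n
    rw [hV, Polynomial.eval_prod, Algebra.norm_eq_prod_embeddings]
    refine Finset.prod_congr rfl fun σ _ => ?_
    rw [Polynomial.map_map]
    have hcast : ((n : ℂ)) = ((σ : F →+* ℂ).comp φ) ((n : ℤ) : 𝓞 F) := by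
      simp
    rw [hcast, Polynomial.eval_map, Polynomial.eval₂_at_apply]
    simp
  -- values of V on ℤ
  set A : ℚ := Algebra.norm ℚ (φ c₀) with hA
  have hval : ∀ n : ℤ, V.eval (n : ℂ) = 0 ∨
      V.eval (n : ℂ) = algebraMap ℚ ℂ A ∨ V.eval (n : ℂ) = -algebraMap ℚ ℂ A := by
    intro n
    obtain ⟨u, hu, hcase⟩ := key ((n : ℤ) : 𝓞 F)
    have heq : h.eval ((n : ℤ) : 𝓞 F) = c₀ * u := by rw [hheval]; exact hu
    rcases hcase with hu1 | hu1
    · have h1 : IsUnit (Algebra.norm ℤ u) := hu1.map (Algebra.norm ℤ)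
      have h2 : ((Algebra.norm ℤ u : ℤ) : ℚ) = Algebra.norm ℚ (φ u) := by
        simpa [NumberField.RingOfIntegers.coe_eq_algebraMap] using Algebra.coe_norm_int u
      rcases Int.isUnit_iff.mp h1 with h3 | h3
      · refine Or.inr (Or.inl ?_)
        rw [hVeval n, heq, map_mul, map_mul]
        have : Algebra.norm ℚ (φ u) = 1 := by rw [← h2, h3]; norm_num
        rw [this, mul_one, hA]
      · refine Or.inr (Or.inr ?_)
        rw [hVeval n, heq, map_mul, map_mul]
        have : Algebra.norm ℚ (φ u) = -1 := by rw [← h2, h3]; norm_num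
        rw [this, hA, mul_neg_one, map_neg]
    · refine Or.inl ?_
      rw [hVeval n, heq, hu1, mul_zero, map_zero, Algebra.norm_zero, map_zero]
  -- the contradiction
  set a : ℂ := algebraMap ℚ ℂ A with ha
  have hWroots : {x : ℂ | (V * ((V - C a) * (V + C a))).IsRoot x}.Infinite := by
    apply Set.infinite_of_injective_forall_mem (f := fun n : ℤ => (n : ℂ)) Int.cast_injective
    intro n
    simp only [Set.mem_setOf_eq, IsRoot, eval_mul, eval_sub, eval_add, eval_C]
    rcases hval n with h1 | h1 | h1 <;> rw [h1] <;> ring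
  have hW0 : V * ((V - C a) * (V + C a)) = 0 :=
    Polynomial.eq_zero_of_infinite_isRoot _ hWroots
  rcases mul_eq_zero.mp hW0 with h1 | h1
  · exact hV0 h1
  rcases mul_eq_zero.mp h1 with h2 | h2
  · have : V = C a := by linear_combination h2
    rw [this, natDegree_C] at hVdeg; simp at hVdeg
  · have : V = C (-a) := by rw [C_neg]; linear_combination h2
    rw [this, natDegree_C] at hVdeg; simp at hVdeg

end Aux


section Aux2

variable {F : Type*} [Field F] [NumberField F]

lemma stmt5_aux_model (f : F[X]) :
    ∃ (N : 𝓞 F) (g : (𝓞 F)[X]), N ≠ 0 ∧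
      g.map (algebraMap (𝓞 F) F) = C (algebraMap (𝓞 F) F N) * f := by
  obtain ⟨b, hb⟩ := IsLocalization.integerNormalization_map_to_map
    (nonZeroDivisors (𝓞 F)) f
  refine ⟨(b : 𝓞 F), IsLocalization.integerNormalization (nonZeroDivisors (𝓞 F)) f,
    nonZeroDivisors.coe_ne_zero b, ?_⟩
  rw [hb]
  ext i
  simp [Polynomial.coeff_smul, Algebra.smul_def, coeff_C_mul]

lemma stmt5_aux_model_eval {N : 𝓞 F} {g : (𝓞 F)[X]} {f : F[X]}
    (hg : g.map (algebraMap (𝓞 F) F) = C (algebraMap (𝓞 F) F N) * f) (t : 𝓞 F) :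
    algebraMap (𝓞 F) F (g.eval t) =
      algebraMap (𝓞 F) F N * f.eval (algebraMap (𝓞 F) F t) := by
  have h2 := congrArg (Polynomial.eval (algebraMap (𝓞 F) F t)) hg
  rwa [Polynomial.eval_map, Polynomial.eval₂_at_apply, eval_mul, eval_C] at h2

lemma stmt5_aux_val_one {w : HeightOneSpectrum (𝓞 F)} {x : 𝓞 F} (hx : x ∉ w.asIdeal) :
    w.intValuation x = 1 := by
  have h1 : w.intValuationDef x ≤ 1 := intValuation_le_one w x
  have h2 : ¬ w.intValuationDef x < 1 := fun hlt =>
    hx (Ideal.dvd_span_singleton.mp ((intValuation_lt_one_iff_dvd w x).mp hlt))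
  rw [intValuation_apply]
  exact le_antisymm h1 (not_lt.mp h2)

lemma stmt5_aux_val_lt_one {w : HeightOneSpectrum (𝓞 F)} {x : 𝓞 F} (hx : x ∈ w.asIdeal) :
    w.intValuation x < 1 := by
  rw [intValuation_apply]
  exact (intValuation_lt_one_iff_dvd w x).mpr (Ideal.dvd_span_singleton.mpr hx)

-- valuation of f-values computed through an integral model, at a place where the
-- denominator is a unit
lemma stmt5_aux_vmodel {w : HeightOneSpectrum (𝓞 F)} {N : 𝓞 F} {g : (𝓞 F)[X]} {f : F[X]}
    (hg : g.map (algebraMap (𝓞 F) F) = C (algebraMap (𝓞 F) F N) * f)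
    (hN : N ∉ w.asIdeal) (t : 𝓞 F) :
    w.valuation F (f.eval (algebraMap (𝓞 F) F t)) = w.intValuation (g.eval t) := by
  have h1 := congrArg (w.valuation (K := F)) (stmt5_aux_model_eval hg t)
  rw [valuation_of_algebraMap, Valuation.map_mul, valuation_of_algebraMap,
    stmt5_aux_val_one hN, one_mul] at h1
  exact h1.symm

end Aux2


section Aux2
variable {F : Type*} [Field F] [NumberField F]

lemma stmt5_aux_le_one (w : HeightOneSpectrum (𝓞 F)) (x : 𝓞 F) :
    w.intValuation x ≤ 1 := by
  rw [intValuation_apply]; exact intValuation_le_one w x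

end Aux2

/-- `F` a number field, `q(x,y,z)` a non-degenerate ternary quadratic
form over `F` (Gram matrix `M`), and `p(t) = c·p₁(t)^{e₁}⋯p_s(t)^{e_s}` with
`c ∈ F^×` and the `pᵢ` distinct monic irreducible polynomials.  If some `eᵢ` is
odd, then there are infinitely many finite places `w` of `F` admitting
`t_w ∈ 𝓞_w` such that `w(p(t_w))` is odd and `-p(t_w)·det q` is not a square in
`F_w`.  (A uniformizer has valuation `ofAdd (-1)`, so `w(x)` odd reads
`Valued.v x = ofAdd (-(2m+1))` for some natural `m`.) -/
theorem stmt5 (F : Type*) [Field F] [NumberField F]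
    (M : Matrix (Fin 3) (Fin 3) F) (hsymm : M.IsSymm) (hdet : M.det ≠ 0)
    (s : ℕ) (c : F) (hc : c ≠ 0)
    (pi : Fin s → Polynomial F) (e : Fin s → ℕ)
    (hirr : ∀ i, Irreducible (pi i)) (hmonic : ∀ i, (pi i).Monic)
    (hdist : Function.Injective pi)
    (p : Polynomial F)
    (hfact : p = Polynomial.C c * ∏ i, pi i ^ e i)
    (hodd : ∃ i, Odd (e i)) :
    {w : HeightOneSpectrum (NumberField.RingOfIntegers F) |
      ∃ t : w.adicCompletionIntegers F,
        (∃ m : ℤ, Valued.v (Polynomial.aeval (t : w.adicCompletion F) p) =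
          ((ofAdd (2 * m + 1) : Multiplicative ℤ) : WithZero (Multiplicative ℤ))) ∧
        ¬ ∃ b : w.adicCompletion F,
          b ^ 2 = -(Polynomial.aeval (t : w.adicCompletion F) p) *
            (algebraMap F (w.adicCompletion F) M.det) }.Infinite := by
  classical
  obtain ⟨i₀, hei⟩ := hodd
  obtain ⟨kk, hkk⟩ := hei
  set φ := algebraMap (𝓞 F) F with hφdef
  have hφinj : Function.Injective φ := IsFractionRing.injective (𝓞 F) F
  set Q := pi i₀ with hQdef
  set R := Polynomial.C c * ∏ j ∈ Finset.univ.erase i₀, pi j ^ e j with hRdef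
  have hpQR : p = Q ^ e i₀ * R := by
    rw [hfact, hRdef, hQdef, ← Finset.mul_prod_erase Finset.univ _ (Finset.mem_univ i₀)]
    ring
  have hQ0 : Q ≠ 0 := (hirr i₀).ne_zero
  have hQdeg : 0 < Q.natDegree := (hirr i₀).natDegree_pos
  have hQ'0 : derivative Q ≠ 0 := by
    intro hcon
    have := natDegree_eq_zero_of_derivative_eq_zero hcon
    omega
  have hQprime : Prime Q := (hirr i₀).prime
  have hndvd : ¬ Q ∣ R * derivative Q := by
    intro hdvd
    rcases hQprime.dvd_mul.mp hdvd with h1 | h1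
    · rw [hRdef] at h1
      rcases hQprime.dvd_mul.mp h1 with h2 | h2
      · have hc0 : (C c : F[X]) ≠ 0 := by simpa using hc
        have : (C c : F[X]) = 0 := Polynomial.eq_zero_of_dvd_of_degree_lt h2
          (by rw [degree_C hc]; exact Polynomial.degree_pos_of_irreducible (hirr i₀))
        exact hc0 this
      · obtain ⟨j, hj, hdj⟩ := hQprime.exists_mem_finset_dvd h2
        have hdj' : Q ∣ pi j := hQprime.dvd_of_dvd_pow hdj
        have hassoc : Associated Q (pi j) := (hirr i₀).associated_of_dvd (hirr j) hdj'
        have heqj : pi i₀ = pi j :=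
          eq_of_monic_of_associated (hmonic i₀) (hmonic j) hassoc
        exact (Finset.ne_of_mem_erase hj) (hdist heqj).symm
    · have : derivative Q = 0 := Polynomial.eq_zero_of_dvd_of_degree_lt h1
        (Polynomial.degree_derivative_lt hQ0)
      exact hQ'0 this
  have hcop : IsCoprime Q (R * derivative Q) := ((hirr i₀).coprime_iff_not_dvd).mpr hndvd
  obtain ⟨A, B, hbez⟩ := hcop
  -- integral models
  obtain ⟨N₁, q', hN₁, hq'⟩ := stmt5_aux_model (F := F) Q
  obtain ⟨N₂, r', hN₂, hr'⟩ := stmt5_aux_model (F := F) R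
  obtain ⟨N₃, a', hN₃, ha'⟩ := stmt5_aux_model (F := F) A
  obtain ⟨N₄, b', hN₄, hb'⟩ := stmt5_aux_model (F := F) B
  obtain ⟨δ₁, δ₂, hδ₂mem, hδ⟩ := IsFractionRing.div_surjective (A := 𝓞 F) M.det
  have hδ₂ : δ₂ ≠ 0 := nonZeroDivisors.ne_zero hδ₂mem
  have hδ₁ : δ₁ ≠ 0 := by
    intro hcon
    rw [hcon] at hδ
    simp at hδ
    exact hdet hδ.symm
  -- derivative model
  have hs' : (derivative q').map φ = C (φ N₁) * derivative Q := by
    rw [← derivative_map, hq', derivative_mul, derivative_C, zero_mul, zero_add]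
  -- the bad places
  set Δ := N₁ * N₂ * N₃ * N₄ * δ₁ * δ₂ with hΔdef
  have hΔ0 : Δ ≠ 0 := by
    simp only [hΔdef]
    exact mul_ne_zero (mul_ne_zero (mul_ne_zero (mul_ne_zero (mul_ne_zero hN₁ hN₂) hN₃) hN₄) hδ₁) hδ₂
  have hbad : {w : HeightOneSpectrum (𝓞 F) | Δ ∈ w.asIdeal}.Finite := by
    refine (Ideal.finite_factors (I := Ideal.span {Δ}) ?_).subset ?_
    · rw [Ne, Ideal.zero_eq_bot, Ideal.span_singleton_eq_bot]; exact hΔ0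
    · intro w hw
      exact Ideal.dvd_span_singleton.mpr hw
  -- degree of the model of Q
  have hq'deg : 0 < q'.natDegree := by
    have h1 : (q'.map φ).natDegree = q'.natDegree := natDegree_map_eq_of_injective hφinj q'
    have hφN₁ : φ N₁ ≠ 0 := fun hcon => hN₁ (hφinj (by simpa using hcon))
    have h2 : (C (φ N₁) * Q).natDegree = Q.natDegree :=
      natDegree_C_mul_eq_of_mul_eq_one (inv_mul_cancel₀ hφN₁)
    rw [hq', h2] at h1
    omega
  -- conclusion by inclusion
  refine Set.Infinite.mono ?_ (((stmt5_aux_infinite q' hq'deg).diff hbad))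
  rintro w ⟨⟨t₁, ht₁⟩, hwgood⟩
  simp only [Set.mem_setOf_eq] at hwgood ⊢
  -- unit valuations at w
  have hnm : ∀ x y : 𝓞 F, x * y ∉ w.asIdeal → x ∉ w.asIdeal ∧ y ∉ w.asIdeal := by
    intro x y hxy
    constructor
    · exact fun hx => hxy (Ideal.mul_mem_right _ _ hx)
    · exact fun hy => hxy (Ideal.mul_mem_left _ _ hy)
  have h5 := hnm _ _ hwgood
  have h4 := hnm _ _ h5.1
  have h3 := hnm _ _ h4.1
  have h2 := hnm _ _ h3.1
  have h1 := hnm _ _ h2.1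
  have hN₁' : N₁ ∉ w.asIdeal := h1.1
  have hN₂' : N₂ ∉ w.asIdeal := h1.2
  have hN₃' : N₃ ∉ w.asIdeal := h2.2
  have hN₄' : N₄ ∉ w.asIdeal := h3.2
  have hδ₁' : δ₁ ∉ w.asIdeal := h4.2
  have hδ₂' : δ₂ ∉ w.asIdeal := h5.2
  -- Claim 1
  have claim1 : ∀ t : 𝓞 F, w.valuation F (Q.eval (φ t)) < 1 →
      w.valuation F (R.eval (φ t)) = 1 ∧ w.valuation F ((derivative Q).eval (φ t)) = 1 := by
    intro t hQt
    have hb1 : A.eval (φ t) * Q.eval (φ t) +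
        B.eval (φ t) * (R.eval (φ t) * (derivative Q).eval (φ t)) = 1 := by
      have h6 := congrArg (Polynomial.eval (φ t)) hbez
      simpa using h6
    have hvA : w.valuation F (A.eval (φ t)) ≤ 1 := by
      rw [stmt5_aux_vmodel ha' hN₃' t]; exact stmt5_aux_le_one w _
    have hvB : w.valuation F (B.eval (φ t)) ≤ 1 := by
      rw [stmt5_aux_vmodel hb' hN₄' t]; exact stmt5_aux_le_one w _
    have hvR : w.valuation F (R.eval (φ t)) ≤ 1 := by
      rw [stmt5_aux_vmodel hr' hN₂' t]; exact stmt5_aux_le_one w _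
    have hvQ' : w.valuation F ((derivative Q).eval (φ t)) ≤ 1 := by
      rw [stmt5_aux_vmodel hs' hN₁' t]; exact stmt5_aux_le_one w _
    have hsum : (1 : WithZero (Multiplicative ℤ)) ≤
        max (w.valuation F (A.eval (φ t) * Q.eval (φ t)))
          (w.valuation F (B.eval (φ t) * (R.eval (φ t) * (derivative Q).eval (φ t)))) := by
      calc (1 : WithZero (Multiplicative ℤ))
          = w.valuation F (A.eval (φ t) * Q.eval (φ t) +
              B.eval (φ t) * (R.eval (φ t) * (derivative Q).eval (φ t))) := by
            rw [hb1, Valuation.map_one]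
        _ ≤ _ := Valuation.map_add _ _ _
    have hlt : w.valuation F (A.eval (φ t) * Q.eval (φ t)) < 1 := by
      rw [Valuation.map_mul]
      calc w.valuation F (A.eval (φ t)) * w.valuation F (Q.eval (φ t))
          ≤ 1 * w.valuation F (Q.eval (φ t)) := mul_le_mul_left hvA _
        _ = w.valuation F (Q.eval (φ t)) := one_mul _
        _ < 1 := hQt
    have hge : (1 : WithZero (Multiplicative ℤ)) ≤
        w.valuation F (B.eval (φ t)) *
          (w.valuation F (R.eval (φ t)) * w.valuation F ((derivative Q).eval (φ t))) := by
      rcases le_max_iff.mp hsum with h6 | h6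
      · exact absurd h6 (not_le.mpr hlt)
      · rwa [Valuation.map_mul, Valuation.map_mul] at h6
    constructor
    · refine le_antisymm hvR ?_
      calc (1 : WithZero (Multiplicative ℤ)) ≤ _ := hge
        _ ≤ 1 * (w.valuation F (R.eval (φ t)) * w.valuation F ((derivative Q).eval (φ t))) :=
          mul_le_mul_left hvB _
        _ = w.valuation F (R.eval (φ t)) * w.valuation F ((derivative Q).eval (φ t)) := one_mul _
        _ ≤ w.valuation F (R.eval (φ t)) * 1 := mul_le_mul_right hvQ' _
        _ = w.valuation F (R.eval (φ t)) := mul_one _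
    · refine le_antisymm hvQ' ?_
      calc (1 : WithZero (Multiplicative ℤ)) ≤ _ := hge
        _ ≤ 1 * (w.valuation F (R.eval (φ t)) * w.valuation F ((derivative Q).eval (φ t))) :=
          mul_le_mul_left hvB _
        _ = w.valuation F (R.eval (φ t)) * w.valuation F ((derivative Q).eval (φ t)) := one_mul _
        _ ≤ 1 * w.valuation F ((derivative Q).eval (φ t)) := mul_le_mul_left hvR _
        _ = w.valuation F ((derivative Q).eval (φ t)) := one_mul _
  -- the element ofAdd(-1)
  have hcoe1 : ((ofAdd (-1 : ℤ) : Multiplicative ℤ) : WithZero (Multiplicative ℤ)) < 1 := by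
    rw [← WithZero.coe_one, WithZero.coe_lt_coe, ← ofAdd_zero]
    exact Multiplicative.ofAdd_lt.mpr (by norm_num)
  have hcoe2 : ((ofAdd (-2 : ℤ) : Multiplicative ℤ) : WithZero (Multiplicative ℤ)) <
      ((ofAdd (-1 : ℤ) : Multiplicative ℤ) : WithZero (Multiplicative ℤ)) := by
    rw [WithZero.coe_lt_coe]
    exact Multiplicative.ofAdd_lt.mpr (by norm_num)
  -- Claim 2 : a point where Q has valuation exactly ofAdd (-1)
  have claim2 : ∃ t : 𝓞 F, w.valuation F (Q.eval (φ t)) =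
      ((ofAdd (-1 : ℤ) : Multiplicative ℤ) : WithZero (Multiplicative ℤ)) := by
    obtain ⟨π, hπ⟩ := intValuation_exists_uniformizer w
    change _ = ((ofAdd (-1 : ℤ) : Multiplicative ℤ) : WithZero (Multiplicative ℤ)) at hπ
    have hQt₁ : w.valuation F (Q.eval (φ t₁)) < 1 := by
      rw [stmt5_aux_vmodel hq' hN₁' t₁]
      exact stmt5_aux_val_lt_one ht₁
    by_cases hsq : q'.eval t₁ ∈ w.asIdeal ^ 2
    · -- adjust t₁ by the uniformizer
      have hval2 : w.intValuation (q'.eval t₁) ≤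
          ((ofAdd (-2 : ℤ) : Multiplicative ℤ) : WithZero (Multiplicative ℤ)) := by
        rw [intValuation_apply]
        have h6 := (intValuation_le_pow_iff_dvd w (q'.eval t₁) 2).mpr
          (Ideal.dvd_span_singleton.mpr hsq)
        convert h6 using 3 <;> norm_num <;> rfl
      obtain ⟨k, hk⟩ := Polynomial.binomExpansion q' t₁ π
      have hder : w.intValuation ((derivative q').eval t₁) = 1 := by
        have h6 := stmt5_aux_vmodel hs' hN₁' t₁
        rw [(claim1 t₁ hQt₁).2] at h6
        exact h6.symm
      have hmid : w.intValuation ((derivative q').eval t₁ * π) =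
          ((ofAdd (-1 : ℤ) : Multiplicative ℤ) : WithZero (Multiplicative ℤ)) := by
        rw [Valuation.map_mul, hder, one_mul, hπ]
      have hsqneg : w.intValuation (k * π ^ 2) <
          ((ofAdd (-1 : ℤ) : Multiplicative ℤ) : WithZero (Multiplicative ℤ)) := by
        have h6 : w.intValuation (k * π ^ 2) ≤
            ((ofAdd (-2 : ℤ) : Multiplicative ℤ) : WithZero (Multiplicative ℤ)) := by
          rw [Valuation.map_mul, Valuation.map_pow, hπ]
          calc w.intValuation k * ((ofAdd (-1 : ℤ) : Multiplicative ℤ) :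
                WithZero (Multiplicative ℤ)) ^ 2
              ≤ 1 * ((ofAdd (-1 : ℤ) : Multiplicative ℤ) : WithZero (Multiplicative ℤ)) ^ 2 :=
                mul_le_mul_left (stmt5_aux_le_one w k) _
            _ = ((ofAdd (-1 : ℤ) : Multiplicative ℤ) : WithZero (Multiplicative ℤ)) ^ 2 :=
                one_mul _
            _ = ((ofAdd (-2 : ℤ) : Multiplicative ℤ) : WithZero (Multiplicative ℤ)) := by
                rw [← WithZero.coe_pow, WithZero.coe_inj, pow_two, ← ofAdd_add]
                norm_num
        exact lt_of_le_of_lt h6 hcoe2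
      refine ⟨t₁ + π, ?_⟩
      rw [stmt5_aux_vmodel hq' hN₁' (t₁ + π), hk]
      have hfirst : w.intValuation (q'.eval t₁ + (derivative q').eval t₁ * π) =
          ((ofAdd (-1 : ℤ) : Multiplicative ℤ) : WithZero (Multiplicative ℤ)) := by
        rw [Valuation.map_add_eq_of_lt_right, hmid]
        rw [hmid]
        exact lt_of_le_of_lt hval2 hcoe2
      rw [Valuation.map_add_eq_of_lt_left, hfirst]
      rw [hfirst]
      exact hsqneg
    · -- t₁ already works
      have hz0 : q'.eval t₁ ≠ 0 := fun hcon => hsq (by rw [hcon]; exact zero_mem _)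
      have hzne : w.intValuation (q'.eval t₁) ≠ 0 := by
        rw [intValuation_apply]
        exact intValuation_ne_zero w _ hz0
      have hle : w.intValuation (q'.eval t₁) ≤
          ((ofAdd (-1 : ℤ) : Multiplicative ℤ) : WithZero (Multiplicative ℤ)) := by
        rw [intValuation_apply]
        have h6 := (intValuation_le_pow_iff_dvd w (q'.eval t₁) 1).mpr
          (Ideal.dvd_span_singleton.mpr (by rwa [pow_one]))
        convert h6 using 3 <;> norm_num <;> rfl
      have hnle : ¬ w.intValuation (q'.eval t₁) ≤
          ((ofAdd (-2 : ℤ) : Multiplicative ℤ) : WithZero (Multiplicative ℤ)) := by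
        rw [intValuation_apply]
        intro h6
        refine hsq (Ideal.dvd_span_singleton.mp ?_)
        have h7 := (intValuation_le_pow_iff_dvd w (q'.eval t₁) 2).mp
          (by convert h6 using 3 <;> norm_num <;> rfl)
        exact h7
      refine ⟨t₁, ?_⟩
      rw [stmt5_aux_vmodel hq' hN₁' t₁]
      set α := w.intValuation (q'.eval t₁) with hα
      have hγα : ((WithZero.unzero hzne : Multiplicative ℤ) : WithZero (Multiplicative ℤ)) = α :=
        WithZero.coe_unzero hzne
      rw [← hγα] at hle hnle ⊢
      rw [WithZero.coe_le_coe] at hle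
      rw [WithZero.coe_le_coe] at hnle
      rw [WithZero.coe_inj]
      have h8 : Multiplicative.toAdd (WithZero.unzero hzne) ≤ -1 := hle
      have h9 : ¬ Multiplicative.toAdd (WithZero.unzero hzne) ≤ -2 := hnle
      have h10 : Multiplicative.toAdd (WithZero.unzero hzne) = -1 := by omega
      rw [← ofAdd_toAdd (WithZero.unzero hzne), h10]
  obtain ⟨t, ht⟩ := claim2
  have hQtlt : w.valuation F (Q.eval (φ t)) < 1 := by rw [ht]; exact hcoe1
  have hvR1 : w.valuation F (R.eval (φ t)) = 1 := (claim1 t hQtlt).1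
  -- valuation of p at t
  have hpow : (ofAdd (-1 : ℤ)) ^ (e i₀) = ofAdd (-(e i₀) : ℤ) := by
    apply Multiplicative.toAdd.injective
    simp [toAdd_pow]
  have hvp : w.valuation F (p.eval (φ t)) =
      ((ofAdd (-(e i₀) : ℤ) : Multiplicative ℤ) : WithZero (Multiplicative ℤ)) := by
    rw [hpQR, eval_mul, eval_pow, Valuation.map_mul, Valuation.map_pow, ht, hvR1, mul_one,
      ← WithZero.coe_pow, WithZero.coe_inj]
    exact hpow
  -- valuation of det
  have hvdet : w.valuation F M.det = 1 := by
    rw [← hδ, map_div₀, valuation_of_algebraMap, valuation_of_algebraMap,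
      stmt5_aux_val_one hδ₁', stmt5_aux_val_one hδ₂', div_one]
  -- move to the completion
  set T : w.adicCompletion F := algebraMap F (w.adicCompletion F) (φ t) with hT
  have hTval : ∀ y : F, Valued.v (algebraMap F (w.adicCompletion F) y) = w.valuation F y :=
    fun y => valuedAdicCompletion_eq_valuation' w y
  have hTmem : T ∈ w.adicCompletionIntegers F := by
    rw [mem_adicCompletionIntegers, hT, hTval]
    exact valuation_le_one w t
  have haev : Polynomial.aeval T p = algebraMap F (w.adicCompletion F) (p.eval (φ t)) := by
    rw [hT, aeval_algebraMap_apply_eq_algebraMap_eval]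
  have hvT : Valued.v (Polynomial.aeval T p) =
      ((ofAdd (-(e i₀) : ℤ) : Multiplicative ℤ) : WithZero (Multiplicative ℤ)) := by
    rw [haev, hTval, hvp]
  refine ⟨⟨T, hTmem⟩, ⟨-(kk + 1 : ℤ), ?_⟩, ?_⟩
  · rw [show ((⟨T, hTmem⟩ : w.adicCompletionIntegers F) : w.adicCompletion F) = T from rfl, hvT,
      WithZero.coe_inj]
    congr 1
    rw [hkk]
    push_cast
    ring
  · rintro ⟨b, hb⟩
    rw [show ((⟨T, hTmem⟩ : w.adicCompletionIntegers F) : w.adicCompletion F) = T from rfl] at hb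
    have h6 := congrArg (Valued.v) hb
    rw [Valuation.map_pow, Valuation.map_mul, Valuation.map_neg, hvT, hTval, hvdet, mul_one] at h6
    have hb0 : Valued.v b ≠ 0 := by
      intro hcon
      rw [hcon] at h6
      simp at h6
    have hγb : ((WithZero.unzero hb0 : Multiplicative ℤ) : WithZero (Multiplicative ℤ)) =
        Valued.v b := WithZero.coe_unzero hb0
    rw [← hγb, ← WithZero.coe_pow, WithZero.coe_inj] at h6
    have h7 := congrArg Multiplicative.toAdd h6
    rw [toAdd_pow, toAdd_ofAdd, nsmul_eq_mul] at h7
    push_cast at h7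
    omega
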